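/- arXiv:2210.01566 — 2 statements merged into one kernel-verified Lean document; each statement's English description precedes it below -/
import Mathlib

section
/- (Theorem 5.8.) Let A : H →ₗ[K] H be a K-linear map, not assumed continuous, which is surjective and inner-product-preserving: ⟪A x, A y⟫ = ⟪x, y⟫ for all x, y : H. Then A is continuous and bijective, and there exists a continuous K-linear map B : H →L[K] H with B (A x) = x and A (B x) = x for all x (so A is a top-linear isomorphism), satisfying ⟪x, A y⟫ = ⟪B x, y⟫ for all x, y (so A is adjointable with adjoint A* = A⁻¹ = B). Moreover, if T : H →L[K] H is the continuous linear map with underlying function A, then ‖T‖ = ‖B‖ and 1 ≤ ‖T‖. -/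
open Filter

noncomputable section

variable (K : Type*) [NontriviallyNormedField K] [IsUltrametricDist K]
  [CompleteSpace K] [StarRing K] [NormedStarGroup K]

/-- The p-adic coordinate Hilbert space: zero-convergent sequences in `K` with sup norm. -/
abbrev H := ZeroAtInftyContinuousMap ℕ K

/-- The standard basis vectors of `H K`. -/
def e (n : ℕ) : H K where
  toFun := fun m => if m = n then 1 else 0
  continuous_toFun := continuous_of_discreteTopology
  zero_at_infty' := by
    rw [cocompact_eq_atTop]
    refine Filter.Tendsto.congr' ?_ tendsto_const_nhds
    filter_upwards [Filter.eventually_gt_atTop n] with m hm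
    simp [Nat.ne_of_gt hm]

/-- The canonical inner product on `H K`: `⟪x, y⟫ = ∑' i, star (x i) * y i`. -/
def inner' (x y : H K) : K := ∑' i, star (x i) * y i

/-- A bounded operator is of trace class if its matrix entries vanish along the
cofinite filter of `ℕ × ℕ`. -/
def IsTraceClass (T : H K →L[K] H K) : Prop :=
  Tendsto (fun q : ℕ × ℕ => (T (e K q.2)) q.1) Filter.cofinite (nhds 0)

lemma apply_norm_le (x : H K) (i : ℕ) : ‖x i‖ ≤ ‖x‖ := by
  rw [← ZeroAtInftyContinuousMap.norm_toBCF_eq_norm]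
  exact x.toBCF.norm_coe_le_norm i

lemma norm_le_of_forall (z : H K) (C : ℝ) (h0 : 0 ≤ C) (h : ∀ i, ‖z i‖ ≤ C) : ‖z‖ ≤ C := by
  rw [← ZeroAtInftyContinuousMap.norm_toBCF_eq_norm]
  exact (BoundedContinuousFunction.norm_le h0).mpr h

lemma summable_inner (x y : H K) : Summable (fun i => star (x i) * y i) := by
  apply NonarchimedeanAddGroup.summable_of_tendsto_cofinite_zero
  rw [Nat.cofinite_eq_atTop, ← cocompact_eq_atTop]
  have hx : Tendsto (fun i => star (x i)) (Filter.cocompact ℕ) (nhds 0) := by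
    have h := (continuous_star.tendsto (0 : K)).comp (zero_at_infty x); rw [star_zero] at h; exact h
  have h2 := hx.mul (zero_at_infty y)
  rw [zero_mul] at h2
  exact h2

lemma inner_cs (x y : H K) : ‖inner' K x y‖ ≤ ‖x‖ * ‖y‖ := by
  refine (IsUltrametricDist.norm_tsum_le _).trans
    (Real.iSup_le (fun i => ?_) (by positivity))
  rw [norm_mul, norm_star]
  exact mul_le_mul (apply_norm_le K x i) (apply_norm_le K y i) (norm_nonneg _) (norm_nonneg _)

lemma inner_e_left (n : ℕ) (y : H K) : inner' K (e K n) y = y n := by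
  unfold inner'
  rw [tsum_eq_single n (fun m hm => by simp [e, hm])]
  simp [e]

lemma inner_e_right (x : H K) (n : ℕ) : inner' K x (e K n) = star (x n) := by
  unfold inner'
  rw [tsum_eq_single n (fun m hm => by simp [e, hm])]
  simp [e]

lemma inner'_sub_right (w x y : H K) :
    inner' K w x - inner' K w y = inner' K w (x - y) := by
  unfold inner'
  rw [← Summable.tsum_sub (summable_inner K w x) (summable_inner K w y)]
  congr 1 with i
  simp [mul_sub]

lemma inner_cont_right (w : H K) : Continuous (fun x => inner' K w x) := by
  refine (LipschitzWith.of_dist_le_mul (K := ‖w‖₊) fun x y => ?_).continuous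
  rw [dist_eq_norm, dist_eq_norm, inner'_sub_right]
  simpa [coe_nnnorm] using inner_cs K w (x - y)

set_option maxHeartbeats 2000000 in
/-- A surjective inner-product-preserving everywhere-defined linear map is an adjointable
top-linear isomorphism whose adjoint is its inverse, and its norm is at least 1. -/
theorem stmt6 (A : H K →ₗ[K] H K) (hsurj : Function.Surjective A)
    (hip : ∀ x y : H K, inner' K (A x) (A y) = inner' K x y) :
    Continuous A ∧ Function.Bijective A ∧
    ∃ B T : H K →L[K] H K, (∀ x : H K, T x = A x) ∧
      (∀ x : H K, B (A x) = x) ∧ (∀ x : H K, A (B x) = x) ∧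
      (∀ x y : H K, inner' K x (A y) = inner' K (B x) y) ∧
      ‖T‖ = ‖B‖ ∧ 1 ≤ ‖T‖ := by
  have hinj : Function.Injective A := by
    refine (injective_iff_map_eq_zero A).mpr fun x hx => ?_
    ext n
    have h := hip x (e K n)
    rw [hx, inner_e_right] at h
    have h0 : inner' K (0 : H K) (A (e K n)) = 0 := by
      unfold inner'
      simp
    rw [h0] at h
    simpa using (star_eq_zero.mp h.symm)
  have hbij : Function.Bijective A := ⟨hinj, hsurj⟩
  set E := LinearEquiv.ofBijective A hbij with hE
  set B' := E.symm.toLinearMap with hB'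
  have hBA : ∀ x, B' (A x) = x := fun x => E.symm_apply_apply x
  have hAB : ∀ x, A (B' x) = x := fun x => E.apply_symm_apply x
  have adj1 : ∀ x y : H K, inner' K x (A y) = inner' K (B' x) y := fun x y => by
    conv_lhs => rw [← hAB x]
    exact hip _ _
  have adj2 : ∀ x y : H K, inner' K x (B' y) = inner' K (A x) y := fun x y => by
    have h := hip x (B' y)
    rw [hAB y] at h
    exact h.symm
  have contA : Continuous A := by
    apply LinearMap.continuous_of_isClosed_graph
    have hset : (A.graph : Set (H K × H K)) =
        ⋂ n, {p : H K × H K | inner' K (B' (e K n)) p.1 = inner' K (e K n) p.2} := by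
      ext p
      simp only [SetLike.mem_coe, LinearMap.mem_graph_iff, Set.mem_iInter, Set.mem_setOf_eq]
      constructor
      · intro h n
        rw [h, inner_e_left, ← inner_e_left K n (A p.1), adj1]
      · intro h
        ext n
        rw [← inner_e_left K n p.2, ← h n, ← adj1, inner_e_left]
    rw [hset]
    exact isClosed_iInter fun n =>
      isClosed_eq ((inner_cont_right K _).comp continuous_fst)
        ((inner_cont_right K _).comp continuous_snd)
  have contB : Continuous B' := by
    apply LinearMap.continuous_of_isClosed_graph
    have hset : (B'.graph : Set (H K × H K)) =
        ⋂ n, {p : H K × H K | inner' K (A (e K n)) p.1 = inner' K (e K n) p.2} := by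
      ext p
      simp only [SetLike.mem_coe, LinearMap.mem_graph_iff, Set.mem_iInter, Set.mem_setOf_eq]
      constructor
      · intro h n
        rw [h, inner_e_left, ← inner_e_left K n (B' p.1), adj2]
      · intro h
        ext n
        rw [← inner_e_left K n p.2, ← h n, ← adj2, inner_e_left]
    rw [hset]
    exact isClosed_iInter fun n =>
      isClosed_eq ((inner_cont_right K _).comp continuous_fst)
        ((inner_cont_right K _).comp continuous_snd)
  set T : H K →L[K] H K := ⟨A, contA⟩ with hT
  set B : H K →L[K] H K := ⟨B', contB⟩ with hB
  have he : ∀ n, ‖e K n‖ = 1 := fun n => by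
    refine le_antisymm (norm_le_of_forall K _ 1 zero_le_one fun i => ?_) ?_
    · by_cases hi : i = n <;> simp [e, hi]
    · have h := apply_norm_le K (e K n) n
      simpa [e] using h
  have hTB : ‖T‖ ≤ ‖B‖ := by
    refine ContinuousLinearMap.opNorm_le_bound T (norm_nonneg B) fun y => ?_
    refine norm_le_of_forall K _ _ (by positivity) fun n => ?_
    have h1 : (T y) n = inner' K (B' (e K n)) y := by
      show (A y) n = _
      rw [← inner_e_left K n (A y), adj1]
    rw [h1]
    refine (inner_cs K _ _).trans (mul_le_mul_of_nonneg_right ?_ (norm_nonneg y))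
    have hb := B.le_opNorm (e K n); rw [he n, mul_one] at hb; exact hb
  have hBT : ‖B‖ ≤ ‖T‖ := by
    refine ContinuousLinearMap.opNorm_le_bound B (norm_nonneg T) fun y => ?_
    refine norm_le_of_forall K _ _ (by positivity) fun n => ?_
    have h1 : (B y) n = inner' K (A (e K n)) y := by
      show (B' y) n = _
      rw [← inner_e_left K n (B' y), adj2]
    rw [h1]
    refine (inner_cs K _ _).trans (mul_le_mul_of_nonneg_right ?_ (norm_nonneg y))
    have ht := T.le_opNorm (e K n); rw [he n, mul_one] at ht; exact ht
  have hnorm : ‖T‖ = ‖B‖ := le_antisymm hTB hBT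
  have h1 : (1 : ℝ) ≤ ‖B‖ * ‖T‖ := by
    have hb := B.le_opNorm (T (e K 0))
    have hba : B (T (e K 0)) = e K 0 := hBA (e K 0)
    rw [hba] at hb
    calc (1 : ℝ) = ‖e K 0‖ := (he 0).symm
      _ ≤ ‖B‖ * ‖T (e K 0)‖ := hb
      _ ≤ ‖B‖ * (‖T‖ * ‖e K 0‖) :=
          mul_le_mul_of_nonneg_left (T.le_opNorm _) (norm_nonneg B)
      _ = ‖B‖ * ‖T‖ := by rw [he 0, mul_one]
  have hT1 : 1 ≤ ‖T‖ := by nlinarith [norm_nonneg T, norm_nonneg B]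
  exact ⟨contA, hbij, B, T, fun x => rfl, hBA, hAB, adj1, hnorm, hT1⟩
end
end

section
/- (Section 7, SOVMs induce p-adic probability distributions from trace-induced states.) Let A : ℕ → (H →L[K] H) be a selfadjoint-operator-valued measure: (a) each A i is self-adjoint, ⟪x, A i y⟫ = ⟪A i x, y⟫ for all x, y; (b) the family is norm-bounded, i.e. there is C : ℝ with ‖A i‖ ≤ C for all i; (c) it sums to the identity in the weak operator topology: for all x, y : H, HasSum (fun i => ⟪x, A i y⟫) ⟪x, y⟫. Let S : H →L[K] H be a statistical operator: S is of trace class, self-adjoint (⟪x, S y⟫ = ⟪S x, y⟫ for all x, y), and tr S = 1 (∑' m, (S (e m)) m = 1). Then the traces tr(A i ∘ S) form a p-adic probability distribution: HasSum (fun i => ∑' m, ((A i) (S (e m))) m) 1. -/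
open Filter

set_option linter.unusedSectionVars false

noncomputable section

variable (K : Type*) [NontriviallyNormedField K] [IsUltrametricDist K]
  [CompleteSpace K] [StarRing K] [NormedStarGroup K]

lemma e_apply (n m : ℕ) : (e K n) m = if m = n then 1 else 0 := rfl

lemma inner'_e (m : ℕ) (y : H K) : inner' K (e K m) y = y m := by
  unfold inner'
  rw [tsum_eq_single m]
  · simp [e_apply]
  · intro j hj; simp [e_apply, hj]

lemma norm_apply_le (g : H K) (n : ℕ) : ‖g n‖ ≤ ‖g‖ := by
  rw [← ZeroAtInftyContinuousMap.norm_toBCF_eq_norm]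
  exact g.toBCF.norm_coe_le_norm n

/-- A SOVM paired with a statistical operator yields a p-adic probability distribution. -/
theorem stmt14 (A : ℕ → (H K →L[K] H K))
    (hsa : ∀ (i : ℕ) (x y : H K), inner' K x (A i y) = inner' K (A i x) y)
    (hbd : ∃ C : ℝ, ∀ i : ℕ, ‖A i‖ ≤ C)
    (hsum : ∀ x y : H K, HasSum (fun i => inner' K x (A i y)) (inner' K x y))
    (S : H K →L[K] H K) (hS : IsTraceClass K S)
    (hSsa : ∀ x y : H K, inner' K x (S y) = inner' K (S x) y)
    (hStr : (∑' m, (S (e K m)) m) = 1) :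
    HasSum (fun i => ∑' m, ((A i) (S (e K m))) m) 1 := by
  obtain ⟨C, hC⟩ := hbd
  have hC0 : 0 ≤ C := le_trans (norm_nonneg (A 0)) (hC 0)
  set f : ℕ × ℕ → K := fun q => (A q.1 (S (e K q.2))) q.2 with hf
  -- fiberwise sums over i
  have hfib : ∀ m, HasSum (fun i => f (i, m)) ((S (e K m)) m) := by
    intro m
    have h := hsum (e K m) (S (e K m))
    simp only [inner'_e] at h
    exact h
  -- f tends to zero along the cofinite filter on ℕ × ℕ
  have hf0 : Tendsto f cofinite (nhds 0) := by
    rw [NormedAddCommGroup.tendsto_nhds_zero]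
    intro ε hε
    rw [eventually_cofinite]
    set ε' : ℝ := ε / (C + 1) with hε'
    have hε'pos : 0 < ε' := div_pos hε (by linarith)
    -- finitely many big entries of S
    have hB : {q : ℕ × ℕ | ¬ ‖(S (e K q.2)) q.1‖ < ε'}.Finite := by
      have := hS
      rw [IsTraceClass, NormedAddCommGroup.tendsto_nhds_zero] at this
      have h2 := this ε' hε'pos
      rwa [eventually_cofinite] at h2
    set M : Set ℕ := Prod.snd '' {q : ℕ × ℕ | ¬ ‖(S (e K q.2)) q.1‖ < ε'} with hM
    have hMfin : M.Finite := hB.image _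
    -- if m ∉ M then ‖S (e K m)‖ ≤ ε'
    have hsmall : ∀ m ∉ M, ‖S (e K m)‖ ≤ ε' := by
      intro m hm
      rw [← ZeroAtInftyContinuousMap.norm_toBCF_eq_norm]
      refine (BoundedContinuousFunction.norm_le hε'pos.le).2 fun n => ?_
      by_contra h
      exact hm ⟨(n, m), by simp only [Set.mem_setOf_eq, not_lt]; exact (not_le.1 h).le, rfl⟩
    -- main finiteness
    have hfibfin : ∀ m : ℕ, {i : ℕ | ¬ ‖f (i, m)‖ < ε}.Finite := by
      intro m
      have hts := (hfib m).summable.tendsto_cofinite_zero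
      rw [NormedAddCommGroup.tendsto_nhds_zero] at hts
      have := hts ε hε
      rwa [eventually_cofinite] at this
    refine Set.Finite.subset
      (Set.Finite.biUnion hMfin
        (fun m _ => Set.Finite.image (fun i => (i, m)) (hfibfin m))) ?_
    · rintro ⟨i, m⟩ hq
      simp only [Set.mem_setOf_eq] at hq
      have hmM : m ∈ M := by
        by_contra hm
        apply hq
        calc ‖f (i, m)‖ ≤ ‖A i (S (e K m))‖ := norm_apply_le K _ m
          _ ≤ ‖A i‖ * ‖S (e K m)‖ := (A i).le_opNorm _
          _ ≤ C * ε' := by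
              exact mul_le_mul (hC i) (hsmall m hm) (norm_nonneg _) hC0
          _ < ε := by
              rw [hε']
              rw [div_eq_inv_mul, ← mul_assoc]
              calc C * (C + 1)⁻¹ * ε < 1 * ε := by
                    apply mul_lt_mul_of_pos_right _ hε
                    rw [mul_inv_lt_iff₀ (by linarith)]
                    linarith
                _ = ε := one_mul ε
      exact Set.mem_biUnion hmM ⟨i, hq, rfl⟩
  have hsf : Summable f := NonarchimedeanAddGroup.summable_of_tendsto_cofinite_zero hf0
  -- total sum is 1
  have hswap : HasSum (fun q : ℕ × ℕ => f (q.2, q.1)) (∑' q, f q) := by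
    have := (Equiv.prodComm ℕ ℕ).hasSum_iff.2 hsf.hasSum
    exact this
  have hcol : HasSum (fun m => (S (e K m)) m) (∑' q, f q) :=
    hswap.prod_fiberwise fun m => hfib m
  have htsum : (∑' q, f q) = 1 := by rw [← hcol.tsum_eq, hStr]
  have htot : HasSum f 1 := htsum ▸ hsf.hasSum
  exact htot.prod_fiberwise fun i => (hsf.prod_factor i).hasSum
end
end
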